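/- Let r ≥ 1 and let λ be a partition with an empty r-core, with at most k positive parts. Define inv_r^(k)(λ) as the number of pairs i < j with a_i > a_j in the row-color sequence a^(k)(λ), and sign_r^(k)(λ) = (−1)^{inv_r^(k)(λ) − inv_r^(k)(∅)}. Then sign_r^(k)(λ) is independent of the choice of k (as long as k is at least the number of positive parts of λ). -/

import Mathlib

/-- Boundary sequence of a partition (list of parts, weakly decreasing,
zero parts allowed and give leading `false`s): walk along the SE boundary
from SW corner to NE corner, `true` = east step, `false` = north step. -/
def bseq : List ℕ → List Bool
  | [] => []
  | a :: s => bseq s ++ List.replicate (a - s.headI) true ++ [false]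

/-- A partition: weakly decreasing list of positive integers. -/
def IsPartition (l : List ℕ) : Prop := l.Pairwise (· ≥ ·) ∧ ∀ x ∈ l, 0 < x

/-- The set of cells of the Young diagram (English convention, 0-indexed):
cell `(i, j)` is present iff `j < l_i`. -/
def cellSet (l : List ℕ) : Set (ℕ × ℕ) := {p | p.2 < l.getD p.1 0}

/-- Two cells are adjacent if they share an edge. -/
def CellAdj (p q : ℕ × ℕ) : Prop :=
  (p.1 = q.1 ∧ (p.2 + 1 = q.2 ∨ q.2 + 1 = p.2)) ∨
  (p.2 = q.2 ∧ (p.1 + 1 = q.1 ∨ q.1 + 1 = p.1))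

/-- A set of cells is connected (via edge-adjacency within the set). -/
def ConnSet (S : Set (ℕ × ℕ)) : Prop :=
  ∀ p ∈ S, ∀ q ∈ S, Relation.ReflTransGen (fun a b => b ∈ S ∧ CellAdj a b) p q

/-- A ribbon (border strip) of length `m`: a connected set of `m` cells
containing no 2×2 square. -/
 def IsRibbonSet (S : Set (ℕ × ℕ)) (m : ℕ) : Prop :=
  S.ncard = m ∧ ConnSet S ∧
  ∀ i j : ℕ, ¬((i, j) ∈ S ∧ (i + 1, j) ∈ S ∧ (i, j + 1) ∈ S ∧ (i + 1, j + 1) ∈ S)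

/-- `l'` is obtained from `l` by peeling a ribbon of length `m`. -/
def PeelRibbon (m : ℕ) (l l' : List ℕ) : Prop :=
  IsPartition l' ∧ cellSet l' ⊂ cellSet l ∧ IsRibbonSet (cellSet l \ cellSet l') m

/-- `l` has an empty `r`-core: it can be reduced to the empty partition by
successively peeling ribbons of length `r`. -/
def EmptyCore (r : ℕ) (l : List ℕ) : Prop :=
  Relation.ReflTransGen (fun x y => PeelRibbon r x y) l []

/-- The row-color sequence `a^(k)(λ)`: `a_i = (ℓ_i + k - i) mod r` (1-indexed),
here 0-indexed as `(l_i + k - i - 1) % r`. -/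
def rcs (r k : ℕ) (l : List ℕ) : List ℕ :=
  (List.range k).map (fun i => (l.getD i 0 + k - i - 1) % r)

/-- Inversion number of a word over a linearly ordered alphabet. -/
def invOn {α : Type*} [LinearOrder α] (w : List α) : ℕ :=
  (w.tails.map (fun t => match t with
    | [] => 0
    | a :: s => (s.filter (fun b => decide (b < a))).length)).sum

/-- `m_i` for a 0/1 (false/true) sequence: the number of `true`s among the
first `i` entries minus the number of `false`s among the remaining entries. -/
def mval (δ : List Bool) (i : ℕ) : ℤ :=
  ((δ.take i).count true : ℤ) - ((δ.drop i).count false : ℤ)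

/-- The anchor of a 0/1 sequence is at position `i` (between indices `i` and
`i+1`) iff the number of `true`s before it equals the number of `false`s after it. -/
def AnchorAt (δ : List Bool) (i : ℕ) : Prop :=
  (δ.take i).count true = (δ.drop i).count false

/-- The graph of the map `φ_r`: `IsPhi r Λ l` says that `l = φ_r (Λ 0, …, Λ (r-1))`,
i.e. the boundary sequences of the `Λ j` can be padded with leading `false`s and
trailing `true`s to a common length `t` and a common anchor position `i₀`, and the
interlaced sequence is a padding of the boundary sequence of `l`. -/
def IsPhi (r : ℕ) (Λ : ℕ → List ℕ) (l : List ℕ) : Prop :=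
  ∃ (t i₀ : ℕ) (s : ℕ → List Bool) (p q : ℕ → ℕ),
    (∀ j < r,
      s j = List.replicate (p j) false ++ bseq (Λ j) ++ List.replicate (q j) true ∧
      (s j).length = t ∧ AnchorAt (s j) i₀) ∧
    ∃ P Q : ℕ,
      List.replicate P false ++ bseq l ++ List.replicate Q true =
        (List.range (r * t)).map (fun v => (s (v % r)).getD (v / r) false)

/-- The height of a ribbon: one less than its number of rows. -/
noncomputable def htOf (S : Set (ℕ × ℕ)) : ℕ := (Prod.fst '' S).ncard - 1

lemma invOn_cons {α : Type*} [LinearOrder α] (a : α) (s : List α) :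
    invOn (a :: s) = (s.filter (fun b => decide (b < a))).length + invOn s := by
  simp [invOn]

lemma invOn_append_singleton {α : Type*} [LinearOrder α] (w : List α) (x : α) :
    invOn (w ++ [x]) = invOn w + (w.filter (fun b => decide (x < b))).length := by
  induction w with
  | nil => simp [invOn]
  | cons a s ih =>
      simp only [List.cons_append, invOn_cons, ih, List.filter_append, List.filter_cons,
        List.length_append]
      by_cases h : x < a
      · simp [h, not_lt_of_gt h]; omega
      · by_cases h2 : a < x <;> simp [h, h2] <;> omega

lemma filt_top (r : ℕ) (hr : 0 < r) (s : List ℕ) (hs : ∀ x ∈ s, x < r) :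
    (s.filter (fun b => decide (b < r-1))).length = s.length - s.count (r-1) := by
  induction s with
  | nil => simp
  | cons x s ih =>
      have hx : x < r := hs x (by simp)
      have hcl : s.count (r-1) ≤ s.length := List.count_le_length
      have ihh := ih (fun y hy => hs y (by simp [hy]))
      rw [List.filter_cons, List.count_cons]
      by_cases h : x = r - 1
      · rw [if_neg (by simp [h]), if_pos (by simp [h]), List.length_cons]
        omega
      · rw [if_pos (by simp; omega), if_neg (by simp; omega), List.length_cons,
          List.length_cons]
        omega

lemma filt_shift (r a : ℕ) (ha : a < r - 1) (s : List ℕ) (hs : ∀ x ∈ s, x < r) :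
    ((s.map (fun b => (b+1) % r)).filter (fun b => decide (b < a + 1))).length
      = (s.filter (fun b => decide (b < a))).length + s.count (r-1) := by
  induction s with
  | nil => simp
  | cons x s ih =>
      have hx : x < r := hs x (by simp)
      have ihh := ih (fun y hy => hs y (by simp [hy]))
      rw [List.map_cons, List.filter_cons, List.filter_cons, List.count_cons]
      by_cases h : x = r - 1
      · have hσ : (x+1) % r = 0 := by rw [h, Nat.sub_add_cancel (by omega), Nat.mod_self]
        rw [if_pos (by rw [hσ]; simp), if_neg (by simp; omega), if_pos (by simp [h]),
          List.length_cons]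
        omega
      · have hσ : (x+1) % r = x + 1 := Nat.mod_eq_of_lt (by omega)
        by_cases h2 : x < a
        · rw [if_pos (by rw [hσ]; simp; omega), if_pos (by simp [h2]),
            if_neg (by simp; omega), List.length_cons, List.length_cons]
          omega
        · rw [if_neg (by rw [hσ]; simp; omega), if_neg (by simp; omega),
            if_neg (by simp; omega)]
          omega

lemma shift_parity (r : ℕ) (hr : 0 < r) (w : List ℕ) (hw : ∀ x ∈ w, x < r) :
    invOn (w.map (fun a => (a+1) % r)) % 2
      = (invOn w + w.count (r-1) * (w.length - w.count (r-1))) % 2 := by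
  induction w with
  | nil => simp
  | cons a s ih =>
      have ha : a < r := hw a (by simp)
      have hs : ∀ x ∈ s, x < r := fun y hy => hw y (by simp [hy])
      have ihh := ih hs
      have hcl : s.count (r-1) ≤ s.length := List.count_le_length
      rw [List.map_cons, invOn_cons, invOn_cons, List.count_cons, List.length_cons]
      by_cases h : a = r - 1
      · have hσ : (a+1) % r = 0 := by rw [h, Nat.sub_add_cancel (by omega), Nat.mod_self]
        have h0 : ((s.map (fun b => (b+1) % r)).filter
            (fun b => decide (b < (a+1) % r))).length = 0 := by
          rw [hσ]; simp
        rw [h0, h, filt_top r hr s hs, if_pos (by simp)]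
        have hmul : (s.count (r-1) + 1) * (s.length + 1 - (s.count (r-1) + 1))
            = s.count (r-1) * (s.length - s.count (r-1)) + (s.length - s.count (r-1)) := by
          rw [show s.length + 1 - (s.count (r-1) + 1) = s.length - s.count (r-1) from by omega,
            Nat.succ_mul]
        rw [hmul]; omega
      · have ha' : a < r - 1 := by omega
        have hσ : (a+1) % r = a + 1 := Nat.mod_eq_of_lt (by omega)
        have hf : ((s.map (fun b => (b+1) % r)).filter
            (fun b => decide (b < (a+1) % r))).length
            = (s.filter (fun b => decide (b < a))).length + s.count (r-1) := by
          rw [hσ]; exact filt_shift r a ha' s hs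
        rw [hf, if_neg (by simp; omega)]
        have hmul : (s.count (r-1) + 0) * (s.length + 1 - (s.count (r-1) + 0))
            = s.count (r-1) * (s.length - s.count (r-1)) + s.count (r-1) := by
          rw [Nat.add_zero, show s.length + 1 - s.count (r-1) = (s.length - s.count (r-1)) + 1
            from by omega, Nat.mul_succ]
        rw [hmul]; omega

lemma rcs_succ (r k : ℕ) (l : List ℕ) (hk : l.length ≤ k) :
    rcs r (k+1) l = (rcs r k l).map (fun a => (a+1) % r) ++ [0] := by
  unfold rcs
  rw [List.range_succ, List.map_append, List.map_map]
  congr 1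
  · apply List.map_congr_left
    intro i hi
    have hik : i < k := List.mem_range.mp hi
    simp only [Function.comp_apply]
    rw [Nat.mod_add_mod]
    congr 1
    omega
  · rw [List.map_singleton, List.getD_eq_default _ _ hk]
    have : 0 + (k+1) - k - 1 = 0 := by omega
    rw [this, Nat.zero_mod]

lemma rcs_lt (r k : ℕ) (hr : 0 < r) (l : List ℕ) : ∀ x ∈ rcs r k l, x < r := by
  intro x hx
  obtain ⟨i, _, rfl⟩ := List.mem_map.mp hx
  exact Nat.mod_lt _ hr

lemma mem_cellSet {l : List ℕ} {p : ℕ × ℕ} : p ∈ cellSet l ↔ p.2 < l.getD p.1 0 := Iff.rfl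

lemma getD_anti {l : List ℕ} (hl : IsPartition l) {i j : ℕ} (hij : i ≤ j) :
    l.getD j 0 ≤ l.getD i 0 := by
  rcases lt_or_ge j l.length with h | h
  · have hi : i < l.length := lt_of_le_of_lt hij h
    rw [List.getD_eq_getElem _ _ h, List.getD_eq_getElem _ _ hi]
    rcases eq_or_lt_of_le hij with rfl | hlt
    · exact le_refl _
    · exact List.pairwise_iff_getElem.mp hl.1 i j hi h hlt
  · rw [List.getD_eq_default _ _ h]; exact Nat.zero_le _

lemma subset_getD {l l' : List ℕ} (h : cellSet l' ⊆ cellSet l) (i : ℕ) :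
    l'.getD i 0 ≤ l.getD i 0 := by
  by_contra hc
  push_neg at hc
  have : (i, l.getD i 0) ∈ cellSet l' := mem_cellSet.mpr hc
  exact lt_irrefl _ (mem_cellSet.mp (h this))

lemma length_mono {l l' : List ℕ} (hl' : IsPartition l')
    (h : ∀ i, l'.getD i 0 ≤ l.getD i 0) : l'.length ≤ l.length := by
  by_contra hc
  push_neg at hc
  have hi : l'.length - 1 < l'.length := by omega
  have h1 : l'.getD (l'.length - 1) 0 = l'[l'.length - 1] := List.getD_eq_getElem _ _ hi
  have h2 : 0 < l'[l'.length - 1] := hl'.2 _ (List.getElem_mem _)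
  have h3 : l.getD (l'.length - 1) 0 = 0 := List.getD_eq_default _ _ (by omega)
  have := h (l'.length - 1)
  omega

lemma path_cross {S : Set (ℕ × ℕ)} {p q : ℕ × ℕ} (hp : p ∈ S)
    (h : Relation.ReflTransGen (fun a b => b ∈ S ∧ CellAdj a b) p q) :
    q ∈ S ∧ ∀ i, p.1 ≤ i → i < q.1 → ∃ j, (i, j) ∈ S ∧ (i + 1, j) ∈ S := by
  induction h with
  | refl => exact ⟨hp, fun i h1 h2 => absurd (lt_of_le_of_lt h1 h2) (lt_irrefl _)⟩
  | @tail b c hpb hbc ih =>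
      obtain ⟨hbS, cross⟩ := ih
      refine ⟨hbc.1, fun i h1 h2 => ?_⟩
      by_cases hib : i < b.1
      · exact cross i h1 hib
      · push_neg at hib
        rcases hbc.2 with ⟨hrow, _⟩ | ⟨hcol, hc1 | hc2⟩
        · omega
        · have hi : i = b.1 := by omega
          refine ⟨b.2, ?_, ?_⟩
          · rw [hi]; exact hbS
          · have : (i + 1, b.2) = c := by
              rw [hcol]; rw [hi, hc1]
            rw [this]; exact hbc.1
        · omega

lemma tele (a b : ℕ → ℕ) (i0 : ℕ) (hba : ∀ i, b i ≤ a i) (hbanti : ∀ i, b (i+1) ≤ b i) :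
    ∀ d, (∀ i, i0 ≤ i → i < i0 + d → a (i+1) = b i + 1) →
    (∑ i ∈ Finset.Ico i0 (i0+d+1), (a i - b i)) + b (i0+d) = a i0 + d := by
  intro d
  induction d with
  | zero =>
      intro _
      rw [show i0 + 0 + 1 = i0 + 1 from rfl, Finset.sum_Ico_eq_sum_range]
      simp
      have := hba i0; omega
  | succ d ih =>
      intro hchain
      have ih' := ih (fun i h1 h2 => hchain i h1 (by omega))
      rw [show i0 + (d+1) + 1 = (i0 + d + 1) + 1 from by omega,
        Finset.sum_Ico_succ_top (by omega)]
      have h1 := hchain (i0 + d) (by omega) (by omega)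
      have h2 := hba (i0 + d + 1)
      have h3 := hbanti (i0 + d)
      have h4 := hba (i0 + d)
      rw [show i0 + (d+1) = i0 + d + 1 from by omega] at *
      omega

lemma lemA (r k : ℕ) (l l' : List ℕ) (hl : IsPartition l) (hpr : PeelRibbon r l l')
    (hk : l.length ≤ k) : (rcs r k l).Perm (rcs r k l') := by
  obtain ⟨hl', hss, hcard, hconn, h2x2⟩ := hpr
  have hsub : cellSet l' ⊆ cellSet l := subset_of_ssubset hss
  have hg : ∀ i, l'.getD i 0 ≤ l.getD i 0 := subset_getD hsub
  have hmemD : ∀ a b : ℕ, ((a, b) ∈ cellSet l \ cellSet l') ↔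
      (l'.getD a 0 ≤ b ∧ b < l.getD a 0) := by
    intro a b
    simp only [Set.mem_diff, cellSet, Set.mem_setOf_eq]
    omega
  -- the set of nonempty rows
  set F : Finset ℕ := (Finset.range l.length).filter (fun i => l'.getD i 0 < l.getD i 0)
    with hF
  have hFmem : ∀ i, i ∈ F ↔ l'.getD i 0 < l.getD i 0 := by
    intro i
    rw [hF, Finset.mem_filter, Finset.mem_range]
    constructor
    · rintro ⟨_, h⟩; exact h
    · intro h
      refine ⟨?_, h⟩
      by_contra hc
      push_neg at hc
      rw [List.getD_eq_default _ _ hc] at h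
      omega
  have hFne : F.Nonempty := by
    obtain ⟨x, hx1, hx2⟩ := Set.exists_of_ssubset hss
    refine ⟨x.1, (hFmem x.1).mpr ?_⟩
    rw [mem_cellSet] at hx1
    have : ¬ x.2 < l'.getD x.1 0 := fun hc => hx2 (mem_cellSet.mpr hc)
    omega
  set i0 := F.min' hFne with hi0
  set i1 := F.max' hFne with hi1
  have hi0F : i0 ∈ F := F.min'_mem hFne
  have hi1F : i1 ∈ F := F.max'_mem hFne
  have h01 : i0 ≤ i1 := F.min'_le _ hi1F
  have hi1len : i1 < l.length := by
    have := (Finset.mem_filter.mp hi1F).1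
    exact Finset.mem_range.mp this
  have hrows : ∀ i, l'.getD i 0 < l.getD i 0 → (i0 ≤ i ∧ i ≤ i1) :=
    fun i hi => ⟨F.min'_le _ ((hFmem i).mpr hi), F.le_max' _ ((hFmem i).mpr hi)⟩
  have hout : ∀ i, (i < i0 ∨ i1 < i) → l.getD i 0 = l'.getD i 0 := by
    intro i hi
    by_contra hc
    have h1 : l'.getD i 0 < l.getD i 0 := by have := hg i; omega
    have := hrows i h1
    omega
  -- cross structure
  have hp : (i0, l'.getD i0 0) ∈ cellSet l \ cellSet l' := by
    rw [hmemD]; exact ⟨le_refl _, (hFmem i0).mp hi0F⟩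
  have hq : (i1, l'.getD i1 0) ∈ cellSet l \ cellSet l' := by
    rw [hmemD]; exact ⟨le_refl _, (hFmem i1).mp hi1F⟩
  have cross := (path_cross hp (hconn _ hp _ hq)).2
  have hstep : ∀ i, i0 ≤ i → i < i1 → l.getD (i+1) 0 = l'.getD i 0 + 1 := by
    intro i hi hi'
    obtain ⟨j, hj1, hj2⟩ := cross i hi hi'
    rw [hmemD] at hj1
    rw [hmemD] at hj2
    by_contra hne
    have ha1 : l.getD (i+1) 0 ≤ l.getD i 0 := getD_anti hl (by omega)
    have ha2 : l'.getD (i+1) 0 ≤ l'.getD i 0 := getD_anti hl' (by omega)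
    exact h2x2 i (l'.getD i 0)
      ⟨(hmemD _ _).mpr (by omega), (hmemD _ _).mpr (by omega),
       (hmemD _ _).mpr (by omega), (hmemD _ _).mpr (by omega)⟩
  -- cardinality computation
  have hsum : l.getD i0 0 + i1 = r + i0 + l'.getD i1 0 := by
    classical
    set Fset : Finset (ℕ × ℕ) := (Finset.range (i1+1)).biUnion
      (fun i => (Finset.Ico (l'.getD i 0) (l.getD i 0)).map
        ⟨fun j => (i, j), fun a b h => by simpa using h⟩) with hFset
    have hFsetmem : ∀ a b : ℕ, ((a, b) ∈ Fset) ↔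
        (a ≤ i1 ∧ l'.getD a 0 ≤ b ∧ b < l.getD a 0) := by
      intro a b
      rw [hFset, Finset.mem_biUnion]
      constructor
      · rintro ⟨i, hi, hmem⟩
        rw [Finset.mem_map] at hmem
        obtain ⟨j, hj, hje⟩ := hmem
        change (i, j) = (a, b) at hje
        simp only [Prod.mk.injEq] at hje
        obtain ⟨rfl, rfl⟩ := hje
        rw [Finset.mem_Ico] at hj
        exact ⟨by simpa using Nat.lt_succ_iff.mp (Finset.mem_range.mp hi), hj.1, hj.2⟩
      · rintro ⟨h1, h2, h3⟩
        refine ⟨a, Finset.mem_range.mpr (by omega), ?_⟩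
        rw [Finset.mem_map]
        exact ⟨b, Finset.mem_Ico.mpr ⟨h2, h3⟩, rfl⟩
    have hD : cellSet l \ cellSet l' = ↑Fset := by
      ext p
      obtain ⟨a, b⟩ := p
      rw [Finset.mem_coe, hmemD, hFsetmem]
      constructor
      · intro h
        exact ⟨(hrows a (by omega)).2, h⟩
      · intro h
        exact ⟨h.2.1, h.2.2⟩
    have hdisj : ∀ x ∈ Finset.range (i1+1), ∀ y ∈ Finset.range (i1+1), x ≠ y →
        Disjoint ((Finset.Ico (l'.getD x 0) (l.getD x 0)).map
          ⟨fun j => (x, j), fun a b h => by simpa using h⟩)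
          ((Finset.Ico (l'.getD y 0) (l.getD y 0)).map
          ⟨fun j => (y, j), fun a b h => by simpa using h⟩) := by
      intro x _ y _ hxy
      rw [Finset.disjoint_left]
      rintro ⟨a, b⟩ hx hy
      rw [Finset.mem_map] at hx hy
      obtain ⟨j1, _, hj1⟩ := hx
      obtain ⟨j2, _, hj2⟩ := hy
      change (x, j1) = (a, b) at hj1
      change (y, j2) = (a, b) at hj2
      simp only [Prod.mk.injEq] at hj1 hj2
      exact hxy (hj1.1.symm ▸ hj2.1.symm ▸ rfl)
    have hr1 : r = ∑ i ∈ Finset.range (i1+1), (l.getD i 0 - l'.getD i 0) := by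
      rw [← hcard, hD, Set.ncard_coe_finset, hFset, Finset.card_biUnion hdisj]
      congr 1
      ext i
      rw [Finset.card_map, Nat.card_Ico]
    have hr2 : ∑ i ∈ Finset.range (i1+1), (l.getD i 0 - l'.getD i 0)
        = ∑ i ∈ Finset.Ico i0 (i1+1), (l.getD i 0 - l'.getD i 0) := by
      rw [eq_comm]
      apply Finset.sum_subset
      · intro i hi
        rw [Finset.mem_Ico] at hi
        exact Finset.mem_range.mpr hi.2
      · intro i hi1' hi2'
        rw [Finset.mem_range] at hi1'
        rw [Finset.mem_Ico] at hi2'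
        have : i < i0 := by omega
        have := hout i (Or.inl this)
        omega
    have htele := tele (fun i => l.getD i 0) (fun i => l'.getD i 0) i0 hg
      (fun i => getD_anti hl' (by omega)) (i1 - i0)
      (fun i h1 h2 => hstep i h1 (by omega))
    have htele' : (∑ i ∈ Finset.Ico i0 (i0 + (i1 - i0) + 1), (l.getD i 0 - l'.getD i 0))
        + l'.getD (i0 + (i1 - i0)) 0 = l.getD i0 0 + (i1 - i0) := htele
    rw [show i0 + (i1 - i0) = i1 from by omega] at htele'
    rw [hr2] at hr1
    omega
  -- the permutation
  have hi1k : i1 < k := by omega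
  set π : ℕ → ℕ := fun i => if i0 ≤ i ∧ i ≤ i1 then (if i = i1 then i0 else i + 1) else i
    with hπ
  set τ : ℕ → ℕ := fun i => if i0 ≤ i ∧ i ≤ i1 then (if i = i0 then i1 else i - 1) else i
    with hτ
  have hτπ : ∀ i, τ (π i) = i := by
    intro i
    rw [hπ, hτ]
    dsimp only
    split_ifs <;> omega
  have hinj : Set.InjOn π ↑(Finset.range k) := by
    intro a _ b _ hab
    have := congrArg τ hab
    rwa [hτπ, hτπ] at this
  have hπlt : ∀ i, i < k → π i < k := by
    intro i hik
    rw [hπ]; dsimp only; split_ifs <;> omega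
  have himg : (Finset.range k).image π = Finset.range k := by
    apply Finset.eq_of_subset_of_card_le
    · intro j hj
      rw [Finset.mem_image] at hj
      obtain ⟨i, hi, rfl⟩ := hj
      exact Finset.mem_range.mpr (hπlt i (Finset.mem_range.mp hi))
    · exact le_of_eq (Finset.card_image_of_injOn hinj).symm
  have hmult : Multiset.map π ↑(List.range k) = (↑(List.range k) : Multiset ℕ) := by
    rw [Multiset.coe_range, ← Finset.range_val, ← Finset.image_val_of_injOn hinj, himg]
  have hpoint : ∀ i ∈ (↑(List.range k) : Multiset ℕ),
      (l'.getD i 0 + k - i - 1) % r = ((fun i => (l.getD i 0 + k - i - 1) % r) ∘ π) i := by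
    intro i hi
    have hik : i < k := List.mem_range.mp (Multiset.mem_coe.mp hi)
    simp only [Function.comp_apply]
    rw [hπ]; dsimp only
    by_cases hin : i0 ≤ i ∧ i ≤ i1
    · rw [if_pos hin]
      by_cases hii1 : i = i1
      · rw [if_pos hii1, hii1]
        have harg : l.getD i0 0 + k - i0 - 1 = (l'.getD i1 0 + k - i1 - 1) + r := by omega
        rw [harg, Nat.add_mod_right]
      · rw [if_neg hii1]
        have hst := hstep i hin.1 (by omega)
        have harg : l'.getD i 0 + k - i - 1 = l.getD (i+1) 0 + k - (i+1) - 1 := by omega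
        rw [harg]
    · rw [if_neg hin]
      rw [hout i (by omega)]
  have hms : (↑(rcs r k l') : Multiset ℕ) = ↑(rcs r k l) := by
    show (↑((List.range k).map fun i => (l'.getD i 0 + k - i - 1) % r) : Multiset ℕ)
      = ↑((List.range k).map fun i => (l.getD i 0 + k - i - 1) % r)
    rw [← Multiset.map_coe, ← Multiset.map_coe]
    rw [Multiset.map_congr rfl hpoint, ← Multiset.map_map, hmult]
  exact (Multiset.coe_eq_coe.mp hms).symm

lemma parity_step (r k : ℕ) (hr : 0 < r) (l : List ℕ) (hk : l.length ≤ k)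
    (hperm : (rcs r k l).Perm (rcs r k [])) :
    (invOn (rcs r (k+1) l) + invOn (rcs r (k+1) []))  % 2
      = (invOn (rcs r k l) + invOn (rcs r k [])) % 2 := by
  rw [rcs_succ r k l hk, rcs_succ r k [] (by simp)]
  rw [invOn_append_singleton, invOn_append_singleton]
  set w := rcs r k l with hw
  set w0 := rcs r k [] with hw0
  have e1 : w.count (r-1) = w0.count (r-1) := hperm.count_eq _
  have e2 : w.length = w0.length := hperm.length_eq
  have e3 : ((w.map (fun a => (a+1) % r)).filter (fun b => decide (0 < b))).length
      = ((w0.map (fun a => (a+1) % r)).filter (fun b => decide (0 < b))).length :=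
    ((hperm.map _).filter _).length_eq
  have s1 := shift_parity r hr w (rcs_lt r k hr l)
  have s2 := shift_parity r hr w0 (rcs_lt r k hr [])
  rw [e1, e2] at s1
  set p := w0.count (r-1) * (w0.length - w0.count (r-1)) with hp
  omega

lemma neg_one_pow_congr_mod (m n : ℕ) (h : m % 2 = n % 2) : ((-1:ℤ))^m = (-1)^n := by
  conv_lhs => rw [← Nat.div_add_mod m 2]
  conv_rhs => rw [← Nat.div_add_mod n 2]
  rw [pow_add, pow_add, pow_mul, pow_mul, h]
  norm_num

lemma mult_core (r : ℕ) {l : List ℕ} (hcore : EmptyCore r l) :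
    ∀ k, IsPartition l → l.length ≤ k → (rcs r k l).Perm (rcs r k []) := by
  unfold EmptyCore at hcore
  induction hcore using Relation.ReflTransGen.head_induction_on with
  | refl => intro k _ _; exact List.Perm.refl _
  | head hstep htail ih =>
      intro k hpart hk
      have hb_part : IsPartition _ := hstep.1
      have hss := hstep.2.1
      have hlen := length_mono hb_part (fun i => subset_getD (subset_of_ssubset hss) i)
      exact (lemA r k _ _ hpart hstep hk).trans (ih k hb_part (by omega))

theorem sign_r_independent_of_k
    (r : ℕ) (hr : 1 ≤ r) (l : List ℕ) (hl : IsPartition l)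
    (hcore : EmptyCore r l) (k k' : ℕ) (hk : l.length ≤ k) (hk' : l.length ≤ k') :
    (-1 : ℤ) ^ invOn (rcs r k l) * (-1 : ℤ) ^ invOn (rcs r k []) =
      (-1 : ℤ) ^ invOn (rcs r k' l) * (-1 : ℤ) ^ invOn (rcs r k' []) := by
  have hr0 : 0 < r := hr
  have key : ∀ m, l.length ≤ m → (invOn (rcs r m l) + invOn (rcs r m [])) % 2
      = (invOn (rcs r l.length l) + invOn (rcs r l.length [])) % 2 := by
    intro m hm
    induction m, hm using Nat.le_induction with
    | base => rfl
    | succ m hm ih =>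
        rw [parity_step r m hr0 l hm (mult_core r hcore m hl hm), ih]
  rw [← pow_add, ← pow_add]
  exact neg_one_pow_congr_mod _ _ ((key k hk).trans (key k' hk').symm)
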